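/- With K_A ⊆ V_A and K_B ⊆ V_B as in the GPT setup, suppose in addition that K_B is a simplex, i.e., K_B is the convex hull of a finite linearly independent set {s_1, …, s_n} ⊆ V_B (which then spans V_B). Then the minimal and maximal tensor products coincide: K_A ⊗min K_B = K_A ⊗max K_B; in other words, there are no entangled states when one factor is classical. -/

import Mathlib

open TensorProduct

/-- The linear functional `f ⊗ g` on `V ⊗ W` induced by linear functionals `f, g`. -/
noncomputable def tensorFunctional {V W : Type*} [AddCommGroup V] [Module ℝ V]
    [AddCommGroup W] [Module ℝ W] (f : V →ₗ[ℝ] ℝ) (g : W →ₗ[ℝ] ℝ) :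
    V ⊗[ℝ] W →ₗ[ℝ] ℝ :=
  TensorProduct.lift ((LinearMap.mul ℝ ℝ).compl₁₂ f g)

/-- The minimal tensor product of two state spaces. -/
noncomputable def minTensor {V W : Type*} [AddCommGroup V] [Module ℝ V]
    [AddCommGroup W] [Module ℝ W] (K : Set V) (L : Set W) : Set (V ⊗[ℝ] W) :=
  convexHull ℝ {z | ∃ x ∈ K, ∃ y ∈ L, z = x ⊗ₜ[ℝ] y}

/-- The maximal tensor product of two state spaces with unit functionals `eK, eL`. -/
noncomputable def maxTensor {V W : Type*} [AddCommGroup V] [Module ℝ V]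
    [AddCommGroup W] [Module ℝ W] (K : Set V) (L : Set W)
    (eK : V →ₗ[ℝ] ℝ) (eL : W →ₗ[ℝ] ℝ) : Set (V ⊗[ℝ] W) :=
  {z | (∀ f : V →ₗ[ℝ] ℝ, ∀ g : W →ₗ[ℝ] ℝ, (∀ x ∈ K, 0 ≤ f x ∧ f x ≤ 1) →
        (∀ y ∈ L, 0 ≤ g y ∧ g y ≤ 1) → 0 ≤ tensorFunctional f g z) ∧
      tensorFunctional eK eL z = 1}

lemma tensorFunctional_tmul {V W : Type*} [AddCommGroup V] [Module ℝ V]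
    [AddCommGroup W] [Module ℝ W] (f : V →ₗ[ℝ] ℝ) (g : W →ₗ[ℝ] ℝ) (x : V) (y : W) :
    tensorFunctional f g (x ⊗ₜ[ℝ] y) = f x * g y := rfl

/-- If a vector pairs nonnegatively with every effect and has unit value under the
unit functional, it lies in the (compact convex spanning) state space. -/
lemma mem_of_forall_effect_nonneg {V : Type*} [NormedAddCommGroup V] [NormedSpace ℝ V]
    [FiniteDimensional ℝ V] (K : Set V) (hne : K.Nonempty) (hcomp : IsCompact K)
    (hconv : Convex ℝ K) (e : V →ₗ[ℝ] ℝ) (he : ∀ x ∈ K, e x = 1) (x : V)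
    (hx : ∀ f : V →ₗ[ℝ] ℝ, (∀ y ∈ K, 0 ≤ f y ∧ f y ≤ 1) → 0 ≤ f x)
    (hex : e x = 1) : x ∈ K := by
  by_contra hxK
  obtain ⟨f, u, hfu, hux⟩ := geometric_hahn_banach_closed_point hconv hcomp.isClosed hxK
  -- h' = f - u • e  is positive on K? no: f < u on K.  Use h := u•e - f : positive on K, neg at x.
  set h : V →ₗ[ℝ] ℝ := u • e - (f : V →ₗ[ℝ] ℝ) with hh
  have hK : ∀ y ∈ K, 0 < h y := by
    intro y hy
    simp only [hh, LinearMap.sub_apply, LinearMap.smul_apply, smul_eq_mul, he y hy, mul_one,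
      ContinuousLinearMap.coe_coe, sub_pos]
    exact hfu y hy
  have hxneg : h x < 0 := by
    simp only [hh, LinearMap.sub_apply, LinearMap.smul_apply, smul_eq_mul, hex, mul_one,
      ContinuousLinearMap.coe_coe, sub_neg]
    exact hux
  obtain ⟨y₀, hy₀, hmax⟩ := hcomp.exists_isMaxOn hne (h.continuous_of_finiteDimensional.continuousOn)
  have hM : 0 < h y₀ := hK y₀ hy₀
  have := hx ((h y₀)⁻¹ • h) ?_
  · have : 0 ≤ (h y₀)⁻¹ * h x := this
    nlinarith [inv_pos.mpr hM]
  · intro y hy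
    constructor
    · exact mul_nonneg (inv_nonneg.mpr hM.le) (hK y hy).le
    · rw [LinearMap.smul_apply, smul_eq_mul]
      calc (h y₀)⁻¹ * h y ≤ (h y₀)⁻¹ * h y₀ := by
            have := isMaxOn_iff.mp hmax y hy
            nlinarith [inv_pos.mpr hM]
        _ = 1 := inv_mul_cancel₀ hM.ne'

/-- If a vector pairs nonnegatively with every effect and has zero value under the
unit functional, it is zero. -/
lemma eq_zero_of_forall_effect_nonneg {V : Type*} [NormedAddCommGroup V] [NormedSpace ℝ V]
    [FiniteDimensional ℝ V] (K : Set V) (hne : K.Nonempty) (hcomp : IsCompact K)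
    (e : V →ₗ[ℝ] ℝ) (he : ∀ x ∈ K, e x = 1) (x : V)
    (hx : ∀ f : V →ₗ[ℝ] ℝ, (∀ y ∈ K, 0 ≤ f y ∧ f y ≤ 1) → 0 ≤ f x)
    (hex : e x = 0) : x = 0 := by
  have key : ∀ h : V →ₗ[ℝ] ℝ, 0 ≤ h x := by
    intro h
    obtain ⟨y₀, hy₀, hmin⟩ := hcomp.exists_isMinOn hne (h.continuous_of_finiteDimensional.continuousOn)
    obtain ⟨y₁, hy₁, hmax⟩ := hcomp.exists_isMaxOn hne (h.continuous_of_finiteDimensional.continuousOn)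
    set C : ℝ := h y₁ - h y₀ + 1 with hC
    have hCpos : 0 < C := by
      have := isMinOn_iff.mp hmin y₁ hy₁
      simp only [hC]; linarith
    have := hx (C⁻¹ • (h - h y₀ • e)) ?_
    · have h1 : 0 ≤ C⁻¹ * (h x - h y₀ * e x) := this
      rw [hex] at h1
      nlinarith [inv_pos.mpr hCpos]
    · intro y hy
      have h0 : h y₀ ≤ h y := hmin hy
      have h1 : h y ≤ h y₁ := hmax hy
      have heK : e y = 1 := he y hy
      simp only [LinearMap.smul_apply, LinearMap.sub_apply, smul_eq_mul, heK, mul_one]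
      constructor
      · have : 0 ≤ h y - h y₀ := by linarith
        positivity
      · calc C⁻¹ * (h y - h y₀) ≤ C⁻¹ * C := by nlinarith [inv_pos.mpr hCpos]
          _ = 1 := inv_mul_cancel₀ hCpos.ne'
  have : ∀ h : V →ₗ[ℝ] ℝ, h x = 0 := by
    intro h
    have h1 := key h
    have h2 := key (-h)
    simp only [LinearMap.neg_apply, Left.nonneg_neg_iff] at h2
    linarith
  exact (Module.forall_dual_apply_eq_zero_iff ℝ x).mp this

/-- if `K_B` is a simplex (the convex hull of a finite linearly
independent set), then the minimal and maximal tensor products coincide: there is no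
entanglement with a classical system. -/
theorem minTensor_eq_maxTensor_of_simplex
    {VA VB : Type*} [NormedAddCommGroup VA] [NormedSpace ℝ VA] [FiniteDimensional ℝ VA]
    [NormedAddCommGroup VB] [NormedSpace ℝ VB] [FiniteDimensional ℝ VB]
    (KA : Set VA) (KB : Set VB)
    (hneA : KA.Nonempty) (hcompA : IsCompact KA) (hconvA : Convex ℝ KA)
    (hneB : KB.Nonempty) (hcompB : IsCompact KB) (hconvB : Convex ℝ KB)
    (hspanA : Submodule.span ℝ KA = ⊤) (hspanB : Submodule.span ℝ KB = ⊤)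
    (eA : VA →ₗ[ℝ] ℝ) (eB : VB →ₗ[ℝ] ℝ)
    (heA : ∀ x ∈ KA, eA x = 1) (heB : ∀ y ∈ KB, eB y = 1)
    (S : Finset VB)
    (hind : LinearIndependent ℝ (Subtype.val : {x : VB // x ∈ (S : Set VB)} → VB))
    (hKB : KB = convexHull ℝ (S : Set VB)) :
    minTensor KA KB = maxTensor KA KB eA eB := by
  apply Set.Subset.antisymm
  · -- min ⊆ max
    apply convexHull_min
    · rintro z ⟨x, hx, y, hy, rfl⟩
      constructor
      · intro f g hf hg
        rw [tensorFunctional_tmul]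
        exact mul_nonneg (hf x hx).1 (hg y hy).1
      · rw [tensorFunctional_tmul, heA x hx, heB y hy, one_mul]
    · -- maxTensor is convex
      intro z1 h1 z2 h2 a b ha hb hab
      constructor
      · intro f g hf hg
        rw [map_add, map_smul, map_smul, smul_eq_mul, smul_eq_mul]
        exact add_nonneg (mul_nonneg ha (h1.1 f g hf hg)) (mul_nonneg hb (h2.1 f g hf hg))
      · rw [map_add, map_smul, map_smul, smul_eq_mul, smul_eq_mul, h1.2, h2.2]
        linarith
  · -- max ⊆ min
    classical
    intro z hz
    obtain ⟨hpos, hone⟩ := hz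
    -- the basis of VB given by S
    have hspanS : ⊤ ≤ Submodule.span ℝ (Set.range (Subtype.val : {x : VB // x ∈ (S : Set VB)} → VB)) := by
      rw [Subtype.range_coe]
      rw [← top_le_iff] at hspanB
      refine le_trans hspanB ?_
      rw [Submodule.span_le, hKB]
      exact convexHull_min Submodule.subset_span (Submodule.span ℝ (S : Set VB)).convex
    set b : Module.Basis {x : VB // x ∈ (S : Set VB)} ℝ VB := Module.Basis.mk hind hspanS with hb
    have hbapp : ∀ i, b i = i.val := fun i => Module.Basis.mk_apply hind hspanS i
    set g : {x : VB // x ∈ (S : Set VB)} → (VB →ₗ[ℝ] ℝ) := fun i => b.coord i with hg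
    have hgdelta : ∀ i j : {x : VB // x ∈ (S : Set VB)}, g i (j : VB) = if j = i then 1 else 0 := by
      intro i j
      rw [hg]
      simp only [Module.Basis.coord_apply]
      rw [← hbapp j]
      rw [b.repr_self]
      exact Finsupp.single_apply
    have hSKB : ∀ i : {x : VB // x ∈ (S : Set VB)}, (i : VB) ∈ KB := by
      intro i
      rw [hKB]
      exact subset_convexHull ℝ _ i.2
    -- each g i is an effect on KB
    have hgeff : ∀ i, ∀ y ∈ KB, 0 ≤ g i y ∧ g i y ≤ 1 := by
      intro i y hy
      have : KB ⊆ (g i) ⁻¹' (Set.Icc (0:ℝ) 1) := by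
        rw [hKB]
        apply convexHull_min
        · intro s hs
          simp only [Set.mem_preimage, Set.mem_Icc]
          rw [hgdelta i ⟨s, hs⟩]
          split <;> norm_num
        · exact (convex_Icc (0:ℝ) 1).linear_preimage (g i)
      exact (this hy : g i y ∈ Set.Icc (0:ℝ) 1)
    -- the coordinate maps on VA ⊗ VB
    set X : {x : VB // x ∈ (S : Set VB)} → (VA ⊗[ℝ] VB →ₗ[ℝ] VA) :=
      fun i => (TensorProduct.rid ℝ VA).toLinearMap ∘ₗ LinearMap.lTensor VA (g i) with hX
    have hXtmul : ∀ i (x : VA) (y : VB), X i (x ⊗ₜ[ℝ] y) = g i y • x := by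
      intro i x y
      simp [hX]
    -- decomposition of z
    have hdecomp : z = ∑ i, (X i z) ⊗ₜ[ℝ] (i : VB) := by
      have hT : (∑ i : {x : VB // x ∈ (S : Set VB)}, ((TensorProduct.mk ℝ VA VB).flip i.val) ∘ₗ X i) = LinearMap.id := by
        apply TensorProduct.ext'
        intro x y
        simp only [LinearMap.coe_sum, Finset.sum_apply, LinearMap.comp_apply,
          LinearMap.flip_apply, TensorProduct.mk_apply, LinearMap.id_apply]
        have : ∀ i, (X i (x ⊗ₜ[ℝ] y)) ⊗ₜ[ℝ] (i : VB) = x ⊗ₜ[ℝ] (g i y • (i : VB)) := by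
          intro i
          rw [hXtmul, smul_tmul]
        rw [Finset.sum_congr rfl (fun i _ => this i), ← TensorProduct.tmul_sum]
        congr 1
        calc ∑ i, g i y • (i : VB) = ∑ i, b.repr y i • b i := by
              refine Finset.sum_congr rfl (fun i _ => ?_)
              rw [hbapp]
              simp [hg, Module.Basis.coord_apply]
          _ = y := b.sum_repr y
      calc z = LinearMap.id z := rfl
        _ = (∑ i : {x : VB // x ∈ (S : Set VB)}, ((TensorProduct.mk ℝ VA VB).flip i.val) ∘ₗ X i) z := by rw [hT]
        _ = ∑ i : {x : VB // x ∈ (S : Set VB)}, (X i z) ⊗ₜ[ℝ] (i : VB) := by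
            simp [LinearMap.coe_sum, Finset.sum_apply, LinearMap.comp_apply]
    -- evaluation formula
    have hEval : ∀ (f : VA →ₗ[ℝ] ℝ) (g' : VB →ₗ[ℝ] ℝ),
        tensorFunctional f g' z = ∑ i, f (X i z) * g' (i : VB) := by
      intro f g'
      conv_lhs => rw [hdecomp]
      rw [map_sum]
      exact Finset.sum_congr rfl (fun i _ => tensorFunctional_tmul f g' _ _)
    set lam : {x : VB // x ∈ (S : Set VB)} → ℝ := fun i => eA (X i z) with hlam
    have hgEval : ∀ (f : VA →ₗ[ℝ] ℝ) i, tensorFunctional f (g i) z = f (X i z) := by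
      intro f i
      rw [hEval]
      rw [Finset.sum_eq_single i]
      · rw [hgdelta i i]; simp
      · intro j _ hj
        rw [hgdelta i j]
        simp [hj]
      · intro h; exact absurd (Finset.mem_univ i) h
    have heAeff : ∀ x ∈ KA, 0 ≤ eA x ∧ eA x ≤ 1 := by
      intro x hx; rw [heA x hx]; norm_num
    have hlam_nonneg : ∀ i, 0 ≤ lam i := by
      intro i
      have := hpos eA (g i) heAeff (hgeff i)
      rwa [hgEval] at this
    have hlam_sum : ∑ i, lam i = 1 := by
      rw [← hone, hEval]
      refine Finset.sum_congr rfl (fun i _ => ?_)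
      rw [heB _ (hSKB i), mul_one]
    have hfX : ∀ (f : VA →ₗ[ℝ] ℝ), (∀ x ∈ KA, 0 ≤ f x ∧ f x ≤ 1) → ∀ i, 0 ≤ f (X i z) := by
      intro f hf i
      have := hpos f (g i) hf (hgeff i)
      rwa [hgEval] at this
    -- the states
    classical
    set p : {x : VB // x ∈ (S : Set VB)} → VA :=
      fun i => if lam i = 0 then hneA.choose else (lam i)⁻¹ • X i z with hp
    have hpmem : ∀ i, p i ∈ KA := by
      intro i
      by_cases hne0 : lam i = 0
      · simp only [hp, if_pos hne0]
        exact hneA.choose_spec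
      · simp only [hp, if_neg hne0]
        have hpos' : 0 < lam i := lt_of_le_of_ne (hlam_nonneg i) (Ne.symm hne0)
        apply mem_of_forall_effect_nonneg KA hneA hcompA hconvA eA heA
        · intro f hf
          rw [map_smul, smul_eq_mul]
          exact mul_nonneg (inv_nonneg.mpr hpos'.le) (hfX f hf i)
        · rw [map_smul, smul_eq_mul]
          exact inv_mul_cancel₀ hne0
    have hterm : ∀ i, (X i z) ⊗ₜ[ℝ] (i : VB) = lam i • (p i ⊗ₜ[ℝ] (i : VB)) := by
      intro i
      by_cases h0 : lam i = 0
      · simp only [hp, if_pos h0]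
        have hX0 : X i z = 0 := by
          apply eq_zero_of_forall_effect_nonneg KA hneA hcompA eA heA
          · intro f hf
            exact hfX f hf i
          · exact h0
        rw [hX0, h0, TensorProduct.zero_tmul, zero_smul]
      · simp only [hp, if_neg h0]
        rw [TensorProduct.smul_tmul', smul_smul, mul_inv_cancel₀ h0, one_smul]
    have hzsum : z = ∑ i, lam i • (p i ⊗ₜ[ℝ] (i : VB)) := by
      rw [hdecomp]
      exact Finset.sum_congr rfl (fun i _ => hterm i)
    rw [minTensor, hzsum]
    have := Finset.centerMass_mem_convexHull (s := {w : VA ⊗[ℝ] VB | ∃ x ∈ KA, ∃ y ∈ KB, w = x ⊗ₜ[ℝ] y})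
      Finset.univ (w := lam) (fun i _ => hlam_nonneg i) (by rw [hlam_sum]; norm_num)
      (z := fun i => p i ⊗ₜ[ℝ] (i : VB)) (fun i _ => ⟨p i, hpmem i, i, hSKB i, rfl⟩)
    rwa [Finset.centerMass_eq_of_sum_1 _ _ hlam_sum] at this
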